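/- Let G₁ > G₂ > 0. The system P₁ = (G₁−G₂)·ln(2)/2 + P₂/2 and P₂ = G₂·P₁/(2G₁) has the unique solution P₁* = 2·ln(2)·G₁·(G₁−G₂)/(4G₁−G₂) and P₂* = ln(2)·G₂·(G₁−G₂)/(4G₁−G₂); moreover both P₁* and P₂* are strictly less than (G₁+G₂)·ln(2)/2. -/

import Mathlib

open Real Set

theorem asymmetric_duopoly_equilibrium_prices (G₁ G₂ : ℝ) (hG : G₁ > G₂) (hG2 : 0 < G₂) :
    (∀ P₁ P₂ : ℝ,
      (P₁ = (G₁ - G₂) * Real.log 2 / 2 + P₂ / 2 ∧ P₂ = G₂ * P₁ / (2 * G₁)) ↔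
      (P₁ = 2 * Real.log 2 * G₁ * (G₁ - G₂) / (4 * G₁ - G₂) ∧
       P₂ = Real.log 2 * G₂ * (G₁ - G₂) / (4 * G₁ - G₂))) ∧
    2 * Real.log 2 * G₁ * (G₁ - G₂) / (4 * G₁ - G₂) < (G₁ + G₂) * Real.log 2 / 2 ∧
    Real.log 2 * G₂ * (G₁ - G₂) / (4 * G₁ - G₂) < (G₁ + G₂) * Real.log 2 / 2 := by
  have hG1 : 0 < G₁ := lt_trans hG2 hG
  have hd : 0 < 4 * G₁ - G₂ := by linarith
  have hl : 0 < Real.log 2 := Real.log_pos (by norm_num)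
  refine ⟨fun P₁ P₂ => ⟨fun ⟨h1, h2⟩ => ?_, fun ⟨h1, h2⟩ => ?_⟩, ?_, ?_⟩
  · have h2' : P₂ * (2 * G₁) = G₂ * P₁ := by
      rw [h2]; field_simp
    have h1' : P₁ * 2 = (G₁ - G₂) * Real.log 2 + P₂ := by rw [h1]; ring
    have hP1 : P₁ = 2 * Real.log 2 * G₁ * (G₁ - G₂) / (4 * G₁ - G₂) := by
      rw [eq_div_iff hd.ne']; nlinarith
    refine ⟨hP1, ?_⟩
    rw [eq_div_iff hd.ne']; nlinarith
  · constructor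
    · rw [h1, h2]; field_simp [show G₁ * 4 - G₂ ≠ 0 by linarith]; ring
    · rw [h1, h2]; field_simp
  · rw [div_lt_iff₀ hd]; nlinarith [sq_nonneg (G₁ - G₂), mul_pos hG2 hl, mul_pos hG1 hl]
  · rw [div_lt_iff₀ hd]; nlinarith [sq_nonneg (G₁ - G₂), mul_pos hG2 hl, mul_pos hG1 hl]
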